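/- In the weight lattice of the root system A_n (n ≥ 2) with fundamental weights ω_1,…,ω_n and simple roots α_1,…,α_n: if ω is a dominant weight with ω − 2ω_1 a nonzero element of the nonnegative integer span of the simple roots, then ω − (ω_1 + ω_2 + ω_n) also lies in the nonnegative integer span of the simple roots. -/

import Mathlib

/-- The simple root `α_{i+1}` of the root system `A_n` expressed in the basis of
fundamental weights: `α_i = 2ω_i - ω_{i-1} - ω_{i+1}` (indices `0,…,n-1`). -/
def simpleRootA (n : ℕ) (i : Fin n) : Fin n → ℤ :=
  fun j => if j = i then 2
    else if ((j : ℕ) + 1 = (i : ℕ)) ∨ ((i : ℕ) + 1 = (j : ℕ)) then -1 else 0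

/-- `v` lies in the nonnegative integer span of the simple roots of `A_n`. -/
def nnSpanA (n : ℕ) (v : Fin n → ℤ) : Prop :=
  ∃ c : Fin n → ℕ, v = ∑ i, (c i : ℤ) • simpleRootA n i

/-- Sum of simple roots applied at a point. -/
lemma sum_simpleRootA (n : ℕ) (f : Fin n → ℤ) (j : Fin n) :
    (∑ i, f i • simpleRootA n i) j
      = 2 * f j
        - (if h : (j : ℕ) + 1 < n then f ⟨(j : ℕ) + 1, h⟩ else 0)
        - (if h : 0 < (j : ℕ) then f ⟨(j : ℕ) - 1, by omega⟩ else 0) := by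
  have hterm : ∀ i : Fin n, f i • simpleRootA n i j
      = (if i = j then 2 * f j else 0)
        - (if (j : ℕ) + 1 = (i : ℕ) then f i else 0)
        - (if (i : ℕ) + 1 = (j : ℕ) then f i else 0) := by
    intro i
    simp only [simpleRootA, smul_eq_mul]
    rcases eq_or_ne i j with rfl | hne
    · have h1 : ¬((i : ℕ) + 1 = (i : ℕ)) := by omega
      simp [h1]; ring
    · rw [if_neg (fun h => hne h.symm), if_neg hne]
      by_cases h2 : (j : ℕ) + 1 = (i : ℕ)
      · have h3 : ¬((i : ℕ) + 1 = (j : ℕ)) := by omega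
        simp [h2, h3]
      · by_cases h3 : (i : ℕ) + 1 = (j : ℕ)
        · simp [h2, h3]
        · simp [h2, h3]
  rw [Finset.sum_apply]
  simp only [Pi.smul_apply, hterm]
  rw [Finset.sum_sub_distrib, Finset.sum_sub_distrib]
  congr 1
  · congr 1
    · rw [Finset.sum_ite_eq' Finset.univ j fun _ => 2 * f j]
      simp
    · by_cases h : (j : ℕ) + 1 < n
      · have hcond : ∀ i : Fin n, ((j : ℕ) + 1 = (i : ℕ)) ↔ i = ⟨(j : ℕ) + 1, h⟩ := by
          intro i; simp only [Fin.ext_iff, Fin.val_mk]; constructor <;> (intro; omega)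
        rw [dif_pos h]
        rw [Finset.sum_congr rfl (fun i _ => by rw [if_congr (hcond i) rfl rfl])]
        simp
      · rw [dif_neg h, Finset.sum_eq_zero]
        intro i _
        rw [if_neg (by have := i.2; omega)]
  · by_cases h : 0 < (j : ℕ)
    · have hj1 : (j : ℕ) - 1 < n := by have := j.2; omega
      have hcond : ∀ i : Fin n, ((i : ℕ) + 1 = (j : ℕ)) ↔ i = (⟨(j : ℕ) - 1, hj1⟩ : Fin n) := by
        intro i; simp only [Fin.ext_iff, Fin.val_mk]; constructor <;> (intro; omega)
      rw [dif_pos h]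
      rw [Finset.sum_congr rfl (fun i _ => by rw [if_congr (hcond i) rfl rfl])]
      simp
    · rw [dif_neg h, Finset.sum_eq_zero]
      intro i _
      rw [if_neg (by omega)]

/-- In type `A_n`, `n ≥ 2` (weights written in the fundamental weight basis, so
`ω_k` is `Pi.single ⟨k-1,_⟩ 1`): if `ω` is dominant and `ω ≻ 2ω_1`, then
`ω ⪰ ω_1 + ω_2 + ω_n`. -/
theorem stmt3 (n : ℕ) (hn : 2 ≤ n)
    (ω : Fin n → ℤ) (hdom : ∀ i, 0 ≤ ω i)
    (hsub : nnSpanA n (ω - Pi.single ⟨0, by omega⟩ (2 : ℤ)))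
    (hne : ω ≠ Pi.single ⟨0, by omega⟩ (2 : ℤ)) :
    nnSpanA n (ω - (Pi.single ⟨0, by omega⟩ (1 : ℤ) + Pi.single ⟨1, by omega⟩ (1 : ℤ)
      + Pi.single ⟨n - 1, by omega⟩ (1 : ℤ))) := by
  obtain ⟨c, hc⟩ := hsub
  set c' : ℕ → ℕ := fun m => if h : m < n then c ⟨m, h⟩ else 0 with hc'def
  have hc'lt : ∀ m (h : m < n), c' m = c ⟨m, h⟩ := fun m h => dif_pos h
  have hc'ge : ∀ m, n ≤ m → c' m = 0 := fun m h => dif_neg (by omega)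
  have E : ∀ k (hk : k < n), ω ⟨k, hk⟩
      = (if k = 0 then 2 else 0) + 2 * (c' k : ℤ) - (c' (k + 1) : ℤ)
        - (if k = 0 then 0 else (c' (k - 1) : ℤ)) := by
    intro k hk
    have h := congrFun hc ⟨k, hk⟩
    rw [Pi.sub_apply, Pi.single_apply, sum_simpleRootA] at h
    simp only [Fin.val_mk, Fin.mk.injEq] at h
    have e0 : (c ⟨k, hk⟩ : ℤ) = (c' k : ℤ) := by rw [hc'lt k hk]
    have e1 : (if h2 : k + 1 < n then ((c ⟨k + 1, h2⟩ : ℕ) : ℤ) else 0) = (c' (k + 1) : ℤ) := by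
      split
      · rw [hc'lt]
      · rw [hc'ge (k + 1) (by omega)]; simp
    have e2 : (if h2 : 0 < k then ((c ⟨k - 1, by omega⟩ : ℕ) : ℤ) else 0)
        = (if k = 0 then 0 else (c' (k - 1) : ℤ)) := by
      rcases Nat.eq_zero_or_pos k with h0 | h0
      · rw [dif_neg (by omega), if_pos h0]
      · have hne0 : ¬(k = 0) := by omega
        simp only [if_neg hne0, dif_pos h0, hc'lt (k - 1) (by omega)]
    rw [e0, e1, e2] at h
    split_ifs at h ⊢ with h0
    · linarith
    · linarith
  have A : ∀ k, 1 ≤ k → k < n → c' k = 0 → c' (k - 1) = 0 ∧ c' (k + 1) = 0 := by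
    intro k h1 h2 h0
    have hd := hdom ⟨k, h2⟩
    rw [E k h2, if_neg (by omega), if_neg (by omega), h0] at hd
    constructor <;> omega
  have hcontra : ∀ k, 1 ≤ k → k < n → 1 ≤ c' k := by
    by_contra hx
    push_neg at hx
    obtain ⟨k, h1, h2, h0⟩ := hx
    have h0 : c' k = 0 := by omega
    have up : ∀ m, c' (k + m) = 0 := by
      intro m
      induction m with
      | zero => simpa using h0
      | succ m ih =>
        by_cases hm : k + m < n
        · have := (A (k + m) (by omega) hm ih).2
          rwa [Nat.add_succ]
        · exact hc'ge _ (by omega)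
    have down : ∀ m, m ≤ k → c' (k - m) = 0 := by
      intro m
      induction m with
      | zero => intro _; simpa using h0
      | succ m ih =>
        intro hm
        have h := (A (k - m) (by omega) (by omega) (ih (by omega))).1
        have he : k - m - 1 = k - (m + 1) := by omega
        rwa [he] at h
    have hall : ∀ m, c' m = 0 := by
      intro m
      rcases le_or_gt k m with h | h
      · have := up (m - k); rwa [Nat.add_sub_cancel' h] at this
      · have := down (k - m) (by omega)
        rwa [Nat.sub_sub_self h.le] at this
    apply hne
    have hz : ω - Pi.single ⟨0, by omega⟩ (2 : ℤ) = 0 := by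
      rw [hc]
      apply Finset.sum_eq_zero
      intro i _
      have : c i = 0 := by
        have := hall i
        rwa [hc'lt _ i.2, Fin.eta] at this
      rw [this]; simp
    funext j
    have := congrFun hz j
    simp only [Pi.sub_apply, Pi.zero_apply, sub_eq_zero] at this
    exact this
  refine ⟨fun i => if (i : ℕ) = 0 then c i else c i - 1, ?_⟩
  funext j
  rw [Pi.sub_apply, sum_simpleRootA]
  set k := (j : ℕ) with hk
  have hkn : k < n := j.2
  have hjeta : j = ⟨k, hkn⟩ := (Fin.eta j hkn).symm
  have hsingles : ((Pi.single ⟨0, by omega⟩ (1 : ℤ) + Pi.single ⟨1, by omega⟩ (1 : ℤ)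
      + Pi.single ⟨n - 1, by omega⟩ (1 : ℤ) : Fin n → ℤ)) j
      = (if k = 0 then 1 else 0) + (if k = 1 then 1 else 0) + (if k = n - 1 then 1 else 0) := by
    simp only [Pi.add_apply, Pi.single_apply, Fin.ext_iff, Fin.val_mk, ← hk]
  rw [hsingles, hjeta, E k hkn]
  simp only [Fin.val_mk]
  have q2 : 1 ≤ c' k ∨ k = 0 := by
    rcases Nat.eq_zero_or_pos k with h | h
    · exact Or.inr h
    · exact Or.inl (hcontra k h hkn)
  by_cases h1 : k + 1 < n <;> by_cases h2 : 0 < k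
  · rw [dif_pos h1, dif_pos h2]
    simp only [if_neg (show ¬(k = 0) from by omega), if_neg (show ¬(k = n - 1) from by omega),
      if_neg (show ¬(k + 1 = 0) from by omega)]
    rw [hc'lt k hkn, hc'lt (k + 1) h1, hc'lt (k - 1) (by omega)]
    have q1 : 1 ≤ c ⟨k + 1, h1⟩ := by rw [← hc'lt (k + 1) h1]; exact hcontra _ (by omega) h1
    have q2' : 1 ≤ c ⟨k, hkn⟩ := by rw [← hc'lt k hkn]; exact hcontra _ (by omega) hkn
    by_cases hk1 : k = 1
    · simp only [if_pos hk1, if_pos (show k - 1 = 0 from by omega)]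
      omega
    · have q3 : 1 ≤ c ⟨k - 1, by omega⟩ := by
        rw [← hc'lt (k - 1) (by omega)]; exact hcontra _ (by omega) (by omega)
      simp only [if_neg hk1, if_neg (show ¬(k - 1 = 0) from by omega)]
      omega
  · rw [dif_pos h1, dif_neg h2]
    simp only [if_pos (show k = 0 from by omega), if_neg (show ¬(k = 1) from by omega),
      if_neg (show ¬(k = n - 1) from by omega), if_neg (show ¬(k + 1 = 0) from by omega)]
    rw [hc'lt k hkn, hc'lt (k + 1) h1]
    have q1 : 1 ≤ c ⟨k + 1, h1⟩ := by rw [← hc'lt (k + 1) h1]; exact hcontra _ (by omega) h1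
    omega
  · rw [dif_neg h1, dif_pos h2]
    simp only [if_neg (show ¬(k = 0) from by omega), if_pos (show k = n - 1 from by omega)]
    rw [hc'lt k hkn, hc'lt (k - 1) (by omega), hc'ge (k + 1) (by omega)]
    have q2' : 1 ≤ c ⟨k, hkn⟩ := by rw [← hc'lt k hkn]; exact hcontra _ (by omega) hkn
    by_cases hk1 : k = 1
    · simp only [if_pos hk1, if_pos (show k - 1 = 0 from by omega)]
      omega
    · have q3 : 1 ≤ c ⟨k - 1, by omega⟩ := by
        rw [← hc'lt (k - 1) (by omega)]; exact hcontra _ (by omega) (by omega)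
      simp only [if_neg hk1, if_neg (show ¬(k - 1 = 0) from by omega)]
      omega
  · omega
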